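/- Let b₁ ≠ 0 and v ∈ H¹_{per}(𝕋) with ∫_𝕋 v dx₁ = 0. Then u(x,t) := (0, v(x₁ - b₁ t)) is a divergence-free zero-mean solution of the anisotropic Oseen-type equation u_t = -b·∇u + ν ∂²_{x₂} u (with p ≡ 0 and b = (b₁, b₂) constant), and ‖u(·,t)‖_{L²} = ‖u(·,0)‖_{L²} for all t ≥ 0; in particular the equation admits solutions whose L² norm does not decay. -/

import Mathlib

open MeasureTheory

/-- The dot product on `ℝ × ℝ`. -/
def dot2 (a b : ℝ × ℝ) : ℝ := a.1 * b.1 + a.2 * b.2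

/-- The periodicity cell `[0,2π]²` of the torus. -/
noncomputable def box : Set (ℝ × ℝ) :=
  Set.Icc ((0 : ℝ), (0 : ℝ)) (2 * Real.pi, 2 * Real.pi)

section aux

variable {v : ℝ → ℝ}

/-- Key derivative computation for the traveling wave profile. -/
lemma aux_hasFDerivAt (hv : ContDiff ℝ 1 v) (c : ℝ) (x : ℝ × ℝ) :
    HasFDerivAt (fun y : ℝ × ℝ => ((0 : ℝ), v (y.1 - c)))
      ((0 : (ℝ × ℝ) →L[ℝ] ℝ).prod
        (deriv v (x.1 - c) • ContinuousLinearMap.fst ℝ ℝ ℝ)) x := by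
  have h1 : HasFDerivAt (fun y : ℝ × ℝ => y.1 - c) (ContinuousLinearMap.fst ℝ ℝ ℝ) x :=
    (hasFDerivAt_fst).sub_const c
  have h2 : HasDerivAt v (deriv v (x.1 - c)) (x.1 - c) :=
    (hv.differentiable one_ne_zero (x.1 - c)).hasDerivAt
  exact (hasFDerivAt_const (0 : ℝ) x).prodMk (h2.comp_hasFDerivAt x h1)

/-- Reduce a box integral of a function of the first coordinate to an interval integral. -/
lemma aux_box_integral (g : ℝ → ℝ) (hg : Continuous g) :
    (∫ x in box, g x.1) = (2 * Real.pi) * ∫ s in (0:ℝ)..(2 * Real.pi), g s := by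
  have hpi : (0:ℝ) ≤ 2 * Real.pi := by positivity
  have hbox : box = Set.Icc (0:ℝ) (2 * Real.pi) ×ˢ Set.Icc (0:ℝ) (2 * Real.pi) := by
    rw [box, Set.Icc_prod_Icc]
  have hint : IntegrableOn (fun x : ℝ × ℝ => g x.1) box := by
    apply (hg.comp continuous_fst).continuousOn.integrableOn_compact
    rw [hbox]; exact (isCompact_Icc).prod isCompact_Icc
  rw [hbox] at hint ⊢
  rw [Measure.volume_eq_prod] at hint ⊢
  rw [setIntegral_prod _ hint]
  have : ∀ x : ℝ, (∫ _ in Set.Icc (0:ℝ) (2 * Real.pi), g x) = (2 * Real.pi) * g x := by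
    intro x
    rw [setIntegral_const, Real.volume_real_Icc_of_le hpi]
    simp [ENNReal.toReal_ofReal hpi]
  simp_rw [this]
  rw [intervalIntegral.integral_of_le hpi, ← integral_Icc_eq_integral_Ioc,
    ← integral_const_mul]

/-- Periodic shift invariance of the interval integral. -/
lemma aux_shift (hper : Function.Periodic v (2 * Real.pi)) (c : ℝ) :
    (∫ s in (0:ℝ)..(2 * Real.pi), v (s - c)) = ∫ s in (0:ℝ)..(2 * Real.pi), v s := by
  rw [intervalIntegral.integral_comp_sub_right]
  have h := hper.intervalIntegral_add_eq (t := -c) (s := 0)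
  rw [show (0:ℝ) - c = -c by ring, show 2 * Real.pi - c = -c + 2 * Real.pi by ring]
  simpa using h

end aux

/-- For `b₁ ≠ 0` and a periodic zero-mean `v`, the traveling wave
`u(x,t) = (0, v(x₁ - b₁ t))` is a divergence-free zero-mean solution of
`u_t = -b·∇u + ν ∂²_{x₂} u` whose `L²` norm does not decay. -/
theorem stmt_12 (ν b₁ b₂ : ℝ) (hν : 0 < ν) (hb₁ : b₁ ≠ 0)
    (v : ℝ → ℝ) (hv : ContDiff ℝ 1 v) (hper : Function.Periodic v (2 * Real.pi))
    (hmean : (∫ s in (0 : ℝ)..(2 * Real.pi), v s) = 0) :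
    let u : ℝ → ℝ × ℝ → ℝ × ℝ := fun t x => ((0 : ℝ), v (x.1 - b₁ * t))
    (∀ (t : ℝ) (x : ℝ × ℝ),
      (fderiv ℝ (u t) x (1, 0)).1 + (fderiv ℝ (u t) x (0, 1)).2 = 0) ∧
    (∀ t : ℝ, (∫ x in box, u t x) = 0) ∧
    (∀ (t : ℝ) (x : ℝ × ℝ), HasDerivAt (fun s => u s x)
      (-(b₁ • fderiv ℝ (u t) x (1, 0) + b₂ • fderiv ℝ (u t) x (0, 1))
        + ν • fderiv ℝ (fun y => fderiv ℝ (u t) y (0, 1)) x (0, 1)) t) ∧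
    (∀ t : ℝ, (∫ x in box, dot2 (u t x) (u t x))
        = ∫ x in box, dot2 (u 0 x) (u 0 x)) := by
  intro u
  have hcv : Continuous v := hv.continuous
  have hfd : ∀ (t : ℝ) (x : ℝ × ℝ), fderiv ℝ (u t) x =
      (0 : (ℝ × ℝ) →L[ℝ] ℝ).prod
        (deriv v (x.1 - b₁ * t) • ContinuousLinearMap.fst ℝ ℝ ℝ) :=
    fun t x => (aux_hasFDerivAt hv (b₁ * t) x).fderiv
  have h10 : ∀ (t : ℝ) (x : ℝ × ℝ),
      fderiv ℝ (u t) x (1, 0) = ((0 : ℝ), deriv v (x.1 - b₁ * t)) := by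
    intro t x; rw [hfd]; simp
  have h01 : ∀ (t : ℝ) (x : ℝ × ℝ),
      fderiv ℝ (u t) x (0, 1) = ((0 : ℝ), (0 : ℝ)) := by
    intro t x; rw [hfd]; simp
  refine ⟨?_, ?_, ?_, ?_⟩
  · intro t x; rw [h10, h01]; simp
  · intro t
    have hg : Continuous (fun s : ℝ => v (s - b₁ * t)) :=
      hcv.comp (continuous_id.sub continuous_const)
    have hint : IntegrableOn (fun x : ℝ × ℝ => v (x.1 - b₁ * t)) box := by
      apply (hg.comp continuous_fst).continuousOn.integrableOn_compact
      rw [box]; exact isCompact_Icc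
    have h2 : (∫ x in box, u t x)
        = (∫ _x in box, (0 : ℝ), ∫ x in box, v (x.1 - b₁ * t)) :=
      integral_pair (integrable_zero _ _ _) hint
    rw [h2, integral_zero, aux_box_integral _ hg, aux_shift hper (b₁ * t), hmean]
    simp [Prod.ext_iff]
  · intro t x
    have hconst : (fun y : ℝ × ℝ => fderiv ℝ (u t) y (0, 1))
        = fun _ => ((0 : ℝ), (0 : ℝ)) := funext (h01 t)
    have hinner : HasDerivAt (fun s : ℝ => x.1 - b₁ * s) (-b₁) t := by
      simpa using ((hasDerivAt_id t).const_mul b₁).const_sub x.1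
    have houter : HasDerivAt v (deriv v (x.1 - b₁ * t)) (x.1 - b₁ * t) :=
      (hv.differentiable one_ne_zero _).hasDerivAt
    have hcomp : HasDerivAt (fun s : ℝ => v (x.1 - b₁ * s))
        (deriv v (x.1 - b₁ * t) * (-b₁)) t := houter.comp t hinner
    have hprod : HasDerivAt (fun s : ℝ => u s x)
        (((0 : ℝ), deriv v (x.1 - b₁ * t) * (-b₁))) t :=
      (hasDerivAt_const t (0 : ℝ)).prodMk hcomp
    convert hprod using 1
    rw [h10, h01, hconst, fderiv_const_apply]
    simp [Prod.ext_iff]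
    ring
  · intro t
    have hd : ∀ (c : ℝ), (∫ x in box, dot2 (u c x) (u c x))
        = (2 * Real.pi) * ∫ s in (0:ℝ)..(2 * Real.pi), v s * v s := by
      intro c
      have hg : Continuous (fun s : ℝ => v (s - b₁ * c) * v (s - b₁ * c)) :=
        ((hcv.comp (continuous_id.sub continuous_const)).mul
          (hcv.comp (continuous_id.sub continuous_const)))
      have heq : (fun x : ℝ × ℝ => dot2 (u c x) (u c x))
          = fun x : ℝ × ℝ => v (x.1 - b₁ * c) * v (x.1 - b₁ * c) := by
        funext x; simp [dot2, u]
      have hsh : (∫ s in (0:ℝ)..(2 * Real.pi), v (s - b₁ * c) * v (s - b₁ * c))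
          = ∫ s in (0:ℝ)..(2 * Real.pi), v s * v s :=
        aux_shift (v := fun s => v s * v s) (hper.mul hper) (b₁ * c)
      rw [heq, aux_box_integral _ hg, hsh]
    rw [hd t, hd 0]
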